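/- Let k, m be positive integers with k + 1 ≤ m. Let a ∈ ℂ^m and let b : {1,…,m}^k → ℂ be alternating, i.e., b(J∘σ) = sgn(σ)·b(J) for every tuple J ∈ {1,…,m}^k and every permutation σ of {1,…,k}. For each strictly increasing tuple I = (i_1 < ⋯ < i_{k+1}) of indices in {1,…,m}, define Λ(a,b)_I = Σ_{t=1}^{k+1} (−1)^{t+1} a_{i_t} b(I_{−t}), where I_{−t} denotes I with its t-th entry removed. Then Σ_{I strictly increasing (k+1)-tuples} |Λ(a,b)_I|^2 ≤ (Σ_{t=1}^m |a_t|^2) · (Σ_{J strictly increasing k-tuples} |b(J)|^2). -/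

import Mathlib

open scoped Classical

open Finset Equiv

/-- The multilinear operator Λ(a,b):
`Λ(a,b)_I = Σ_t (−1)^t a_{I(t)} b(I with t-th entry removed)` (0-indexed). -/
noncomputable def Lam {k m : ℕ} (a : Fin m → ℂ) (b : (Fin k → Fin m) → ℂ)
    (I : Fin (k + 1) → Fin m) : ℂ :=
  ∑ t : Fin (k + 1), (-1 : ℂ) ^ (t : ℕ) * a (I t) * b (I ∘ t.succAbove)

/-- Induction over adjacent transpositions. -/
lemma perm_adj_induction (n : ℕ) (P : Equiv.Perm (Fin n) → Prop)
    (h1 : P 1) (hmul : ∀ σ τ, P σ → P τ → P (σ * τ))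
    (hadj : ∀ (i : Fin n) (h : (i : ℕ) + 1 < n), P (Equiv.swap i ⟨(i : ℕ) + 1, h⟩)) :
    ∀ σ, P σ := by
  have key : ∀ d : ℕ, ∀ x y : Fin n, x < y → (y : ℕ) - x ≤ d → P (Equiv.swap x y) := by
    intro d
    induction d with
    | zero => intro x y hxy hd; exfalso; rw [Fin.lt_iff_val_lt_val] at hxy; omega
    | succ d ih =>
      intro x y hxy hd
      rw [Fin.lt_iff_val_lt_val] at hxy
      have hx1 : (x : ℕ) + 1 < n := lt_of_le_of_lt (Nat.succ_le_of_lt hxy) y.isLt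
      have hval : ((⟨(x : ℕ) + 1, hx1⟩ : Fin n) : ℕ) = (x : ℕ) + 1 := rfl
      set x' : Fin n := ⟨(x : ℕ) + 1, hx1⟩ with hx'
      rcases eq_or_ne x' y with h | h
      · rw [← h]; exact hadj x hx1
      · have hy : (x : ℕ) + 1 < (y : ℕ) := by
          have := Fin.val_ne_of_ne h; omega
        have hx'y : x' < y := by rw [Fin.lt_iff_val_lt_val, hval]; omega
        have hxx' : x ≠ x' := by
          intro hc; have := congrArg Fin.val hc; rw [hval] at this; omega
        have e : Equiv.swap x' y * Equiv.swap x x' * Equiv.swap x' y = Equiv.swap y x :=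
          Equiv.swap_mul_swap_mul_swap hxx' (Fin.ne_of_lt (by rw [Fin.lt_iff_val_lt_val]; omega))
        have hP : P (Equiv.swap x' y * Equiv.swap x x' * Equiv.swap x' y) := by
          apply hmul; apply hmul
          · exact ih x' y hx'y (by rw [hval]; omega)
          · exact hadj x hx1
          · exact ih x' y hx'y (by rw [hval]; omega)
        rw [e, Equiv.swap_comm] at hP
        exact hP
  intro σ
  refine Equiv.Perm.swap_induction_on σ h1 ?_
  intro f x y hne hPf
  apply hmul _ _ _ hPf
  rcases lt_or_gt_of_ne hne with h | h
  · exact key _ _ _ h le_rfl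
  · rw [Equiv.swap_comm]; exact key _ _ _ h le_rfl

variable {m : ℕ}

def IsAlt {n : ℕ} (f : (Fin n → Fin m) → ℂ) : Prop :=
  ∀ (J : Fin n → Fin m) (σ : Equiv.Perm (Fin n)),
    f (J ∘ σ) = ((Equiv.Perm.sign σ : ℤ) : ℂ) * f J

lemma IsAlt.eq_zero {n : ℕ} {f : (Fin n → Fin m) → ℂ} (hf : IsAlt f)
    {J : Fin n → Fin m} (hJ : ¬ Function.Injective J) : f J = 0 := by
  rw [Function.not_injective_iff] at hJ
  obtain ⟨p, q, hval, hpq⟩ := hJ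
  have h1 : J ∘ (Equiv.swap p q) = J := by
    funext x
    rcases eq_or_ne x p with rfl | hxp
    · simp [Equiv.swap_apply_left, hval]
    rcases eq_or_ne x q with rfl | hxq
    · simp [Equiv.swap_apply_right, hval]
    · simp [Equiv.swap_apply_of_ne_of_ne hxp hxq]
  have := hf J (Equiv.swap p q)
  rw [h1, Equiv.Perm.sign_swap hpq] at this
  push_cast at this
  linear_combination (this) / 2

lemma insertNth_eq_cons_comp {n : ℕ} {β : Type*} (p : Fin (n + 1)) (x : β) (J : Fin n → β) :
    Fin.insertNth p x J = Fin.cons x J ∘ (Fin.cycleRange p) := by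
  funext s
  rcases eq_or_ne s p with rfl | hs
  · simp [Fin.insertNth_apply_same, Fin.cycleRange_self]
  · obtain ⟨q, rfl⟩ := Fin.exists_succAbove_eq (Ne.symm hs).symm
    simp [Fin.insertNth_apply_succAbove, Fin.cycleRange_succAbove]

lemma swap_comp_succAbove {k : ℕ} (j : Fin (k + 1)) (hj : (j : ℕ) + 1 < k + 1) :
    (Equiv.swap j ⟨(j : ℕ) + 1, hj⟩) ∘ (Fin.succAbove ⟨(j : ℕ) + 1, hj⟩) = Fin.succAbove j := by
  set j' : Fin (k + 1) := ⟨(j : ℕ) + 1, hj⟩ with hj'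
  funext x
  rcases lt_trichotomy ((x : ℕ) : ℕ) (j : ℕ) with h | h | h
  · have h1 : j'.succAbove x = Fin.castSucc x := by
      apply Fin.succAbove_of_castSucc_lt
      rw [Fin.lt_def]; simp [hj']; omega
    have h2 : j.succAbove x = Fin.castSucc x := by
      apply Fin.succAbove_of_castSucc_lt
      rw [Fin.lt_def]; simp; omega
    simp only [Function.comp_apply, h1, h2]
    apply Equiv.swap_apply_of_ne_of_ne
    · intro hc; have := congrArg Fin.val hc; simp at this; omega
    · intro hc; have := congrArg Fin.val hc; rw [hj'] at hc; simp [Fin.ext_iff] at hc; omega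
  · have h1 : j'.succAbove x = Fin.castSucc x := by
      apply Fin.succAbove_of_castSucc_lt
      rw [Fin.lt_def]; simp [hj']; omega
    have h2 : j.succAbove x = Fin.succ x := by
      apply Fin.succAbove_of_le_castSucc
      rw [Fin.le_def]; simp; omega
    have hcast : Fin.castSucc x = j := by rw [Fin.ext_iff]; simp; omega
    have hsucc : Fin.succ x = j' := by rw [Fin.ext_iff]; simp [hj']; omega
    simp only [Function.comp_apply, h1, h2, hcast, hsucc, Equiv.swap_apply_left]
  · have h1 : j'.succAbove x = Fin.succ x := by
      apply Fin.succAbove_of_le_castSucc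
      rw [Fin.le_def]; simp [hj']; omega
    have h2 : j.succAbove x = Fin.succ x := by
      apply Fin.succAbove_of_le_castSucc
      rw [Fin.le_def]; simp; omega
    simp only [Function.comp_apply, h1, h2]
    apply Equiv.swap_apply_of_ne_of_ne
    · intro hc; have := congrArg Fin.val hc; simp at this; omega
    · intro hc; have := congrArg Fin.val hc; rw [hj'] at hc; simp [Fin.ext_iff] at hc; omega

lemma swap_comp_succAbove_ne {k : ℕ} (t u v : Fin (k + 1)) (hu : u ≠ t) (hv : v ≠ t)
    (huv : u ≠ v) :
    ∃ p q : Fin k, p ≠ q ∧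
      (Equiv.swap u v) ∘ (Fin.succAbove t) = (Fin.succAbove t) ∘ (Equiv.swap p q) := by
  obtain ⟨p, hp⟩ := Fin.exists_succAbove_eq hu
  obtain ⟨q, hq⟩ := Fin.exists_succAbove_eq hv
  refine ⟨p, q, fun hc => huv (by rw [← hp, ← hq, hc]), ?_⟩
  funext x
  simp only [Function.comp_apply]
  rcases eq_or_ne x p with rfl | hxp
  · rw [hp, Equiv.swap_apply_left, Equiv.swap_apply_left, hq]
  rcases eq_or_ne x q with rfl | hxq
  · rw [hq, Equiv.swap_apply_right, Equiv.swap_apply_right, hp]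
  · rw [Equiv.swap_apply_of_ne_of_ne hxp hxq,
      Equiv.swap_apply_of_ne_of_ne
        (fun hc => hxp (Fin.succAbove_right_injective (hc.trans hp.symm)))
        (fun hc => hxq (Fin.succAbove_right_injective (hc.trans hq.symm)))]

lemma lam_comp_adj {k m : ℕ} (a : Fin m → ℂ) {b : (Fin k → Fin m) → ℂ} (hb : IsAlt b)
    (I : Fin (k + 1) → Fin m) (j : Fin (k + 1)) (hj : (j : ℕ) + 1 < k + 1) :
    Lam a b (I ∘ Equiv.swap j ⟨(j : ℕ) + 1, hj⟩) = - Lam a b I := by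
  set j' : Fin (k + 1) := ⟨(j : ℕ) + 1, hj⟩ with hj'
  have hjval : (j' : ℕ) = (j : ℕ) + 1 := rfl
  have hjj' : j ≠ j' := by
    intro hc; have := congrArg Fin.val hc; simp [hjval] at this
  set e := Equiv.swap j j' with he
  have hcs : (⇑e) ∘ j'.succAbove = j.succAbove := swap_comp_succAbove j hj
  have hcs' : (⇑e) ∘ j.succAbove = j'.succAbove := by
    rw [← hcs, ← Function.comp_assoc]
    funext x
    simp [he, Equiv.swap_apply_self]
  have key : ∀ t : Fin (k + 1),
      (-1 : ℂ) ^ ((e t : Fin (k + 1)) : ℕ) * a ((I ∘ e) (e t)) * b ((I ∘ e) ∘ (e t).succAbove)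
        = - ((-1 : ℂ) ^ (t : ℕ) * a (I t) * b (I ∘ t.succAbove)) := by
    intro t
    rcases eq_or_ne t j with htj | htj
    · rw [htj, show e j = j' from Equiv.swap_apply_left j j']
      have h1 : (I ∘ e) j' = I j := by
        simp only [Function.comp_apply]; rw [he, Equiv.swap_apply_right]
      have h2 : (I ∘ e) ∘ j'.succAbove = I ∘ j.succAbove := by
        rw [Function.comp_assoc, hcs]
      rw [h1, h2, hjval, pow_succ]
      ring
    rcases eq_or_ne t j' with htj' | htj'
    · rw [htj', show e j' = j from Equiv.swap_apply_right j j']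
      have h1 : (I ∘ e) j = I j' := by
        simp only [Function.comp_apply]; rw [he, Equiv.swap_apply_left]
      have h2 : (I ∘ e) ∘ j.succAbove = I ∘ j'.succAbove := by
        rw [Function.comp_assoc, hcs']
      rw [h1, h2, hjval, pow_succ]
      ring
    · rw [Equiv.swap_apply_of_ne_of_ne htj htj']
      have h1 : (I ∘ e) t = I t := by
        simp only [Function.comp_apply]; rw [he, Equiv.swap_apply_of_ne_of_ne htj htj']
      obtain ⟨p, q, hpq, hcomp⟩ := swap_comp_succAbove_ne t j j' htj.symm htj'.symm hjj'
      have h2 : (I ∘ e) ∘ t.succAbove = (I ∘ t.succAbove) ∘ (Equiv.swap p q) := by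
        rw [Function.comp_assoc, he, hcomp, ← Function.comp_assoc]
      rw [h1, h2, hb (I ∘ t.succAbove) (Equiv.swap p q), Equiv.Perm.sign_swap hpq]
      push_cast
      ring
  calc Lam a b (I ∘ e)
      = ∑ t : Fin (k + 1),
          ((-1 : ℂ) ^ ((e t) : ℕ) * a ((I ∘ e) (e t)) * b ((I ∘ e) ∘ (e t).succAbove)) := by
        rw [Lam]
        exact (Equiv.sum_comp e fun t =>
          (-1 : ℂ) ^ (t : ℕ) * a ((I ∘ e) t) * b ((I ∘ e) ∘ t.succAbove)).symm
    _ = ∑ t : Fin (k + 1), - ((-1 : ℂ) ^ (t : ℕ) * a (I t) * b (I ∘ t.succAbove)) :=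
        Finset.sum_congr rfl fun t _ => key t
    _ = - Lam a b I := by rw [Lam, ← Finset.sum_neg_distrib]

lemma lam_isAlt {k m : ℕ} (a : Fin m → ℂ) {b : (Fin k → Fin m) → ℂ} (hb : IsAlt b) :
    IsAlt (Lam a b) := by
  intro I σ
  revert I
  induction σ using perm_adj_induction with
  | h1 => intro I; simp [Function.comp_def]
  | hmul σ τ hσ hτ =>
    intro I
    have h1 : I ∘ ⇑(σ * τ) = (I ∘ ⇑σ) ∘ ⇑τ := by rfl
    rw [h1, hτ, hσ, map_mul]
    push_cast
    ring
  | hadj i h =>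
    intro I
    rw [lam_comp_adj a hb I i h, Equiv.Perm.sign_swap]
    · push_cast; ring
    · intro hc; have := congrArg Fin.val hc; simp at this

lemma IsAlt.insertNth' {n m : ℕ} {f : (Fin (n + 1) → Fin m) → ℂ} (hf : IsAlt f)
    (p : Fin (n + 1)) (x : Fin m) (J : Fin n → Fin m) :
    f (Fin.insertNth p x J) = (-1 : ℂ) ^ (p : ℕ) * f (Fin.cons x J) := by
  rw [insertNth_eq_cons_comp, hf (Fin.cons x J) (Fin.cycleRange p), Fin.sign_cycleRange]
  push_cast
  ring

lemma cons_comp_succAbove_succ {n m : ℕ} (i : Fin m) (J : Fin (n + 1) → Fin m)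
    (p : Fin (n + 1)) :
    Fin.cons i J ∘ (p.succ).succAbove = Fin.cons i (J ∘ p.succAbove) := by
  funext x
  induction x using Fin.cases with
  | zero => simp [Fin.succ_succAbove_zero]
  | succ q => simp [Fin.succ_succAbove_succ]

lemma lam_cons {n m : ℕ} (a : Fin m → ℂ) (b : (Fin (n + 1) → Fin m) → ℂ)
    (i : Fin m) (J : Fin (n + 1) → Fin m) :
    Lam a b (Fin.cons i J) = a i * b J -
      ∑ p : Fin (n + 1), (-1 : ℂ) ^ (p : ℕ) * a (J p) * b (Fin.cons i (J ∘ p.succAbove)) := by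
  rw [Lam, Fin.sum_univ_succ]
  have h0 : Fin.cons i J ∘ Fin.succAbove 0 = J := by
    funext x; simp [Fin.zero_succAbove]
  rw [h0]
  simp only [Fin.cons_zero, Fin.val_zero, pow_zero, one_mul, Fin.cons_succ, Fin.val_succ]
  have hterm : ∀ p : Fin (n + 1),
      (-1 : ℂ) ^ ((p : ℕ) + 1) * a (J p) * b (Fin.cons i J ∘ (p.succ).succAbove)
        = - ((-1 : ℂ) ^ (p : ℕ) * a (J p) * b (Fin.cons i (J ∘ p.succAbove))) := by
    intro p
    rw [cons_comp_succAbove_succ, pow_succ]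
    ring
  rw [Finset.sum_congr rfl fun p _ => hterm p, Finset.sum_neg_distrib]
  ring

lemma strictMono_eq_of_image {n m : ℕ} {f g : Fin n → Fin m} (hf : StrictMono f)
    (hg : StrictMono g) (h : Finset.image f Finset.univ = Finset.image g Finset.univ) :
    f = g := by
  have hcard : (Finset.image f Finset.univ).card = n := by
    rw [Finset.card_image_of_injective _ hf.injective, Finset.card_univ, Fintype.card_fin]
  have h1 := Finset.orderEmbOfFin_unique hcard (fun x => Finset.mem_image_of_mem f (Finset.mem_univ x)) hf
  have h2 := Finset.orderEmbOfFin_unique hcard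
    (fun x => by rw [h]; exact Finset.mem_image_of_mem g (Finset.mem_univ x)) hg
  rw [h2]; exact h1

lemma sort_comp_perm {n m : ℕ} {I : Fin n → Fin m} (hI : StrictMono I)
    (σ : Equiv.Perm (Fin n)) : Tuple.sort (I ∘ ⇑σ) = σ⁻¹ := by
  set f := I ∘ ⇑σ with hf
  have hfinj : Function.Injective f := hI.injective.comp σ.injective
  have h1 : StrictMono (f ∘ ⇑(Tuple.sort f)) :=
    (Tuple.monotone_sort f).strictMono_of_injective (hfinj.comp (Tuple.sort f).injective)
  have h2 : f ∘ ⇑σ⁻¹ = I := by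
    funext x; simp [hf]
  have himg : ∀ τ : Equiv.Perm (Fin n),
      Finset.image (f ∘ ⇑τ) Finset.univ = Finset.image f Finset.univ := by
    intro τ
    rw [← Finset.image_image, Finset.image_univ_of_surjective τ.surjective]
  have heq : f ∘ ⇑(Tuple.sort f) = f ∘ ⇑σ⁻¹ := by
    apply strictMono_eq_of_image h1 (h2 ▸ hI)
    rw [himg, himg]
  exact Equiv.ext fun x => hfinj (congrFun heq x)

lemma sum_all_eq_factorial_mul {n m : ℕ} (g : (Fin n → Fin m) → ℝ)
    (hg0 : ∀ I, ¬Function.Injective I → g I = 0)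
    (hgp : ∀ (I : Fin n → Fin m) (σ : Equiv.Perm (Fin n)), g (I ∘ σ) = g I) :
    ∑ I : Fin n → Fin m, g I =
      (n.factorial : ℝ) * ∑ I ∈ Finset.univ.filter (fun I : Fin n → Fin m => StrictMono I), g I := by
  classical
  have hsplit : ∑ I : Fin n → Fin m, g I
      = ∑ I ∈ Finset.univ.filter (fun I : Fin n → Fin m => Function.Injective I), g I := by
    rw [← Finset.sum_filter_add_sum_filter_not Finset.univ
      (fun I : Fin n → Fin m => Function.Injective I) g]
    have : ∑ I ∈ Finset.univ.filter (fun I : Fin n → Fin m => ¬Function.Injective I), g I = 0 :=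
      Finset.sum_eq_zero fun I hI => hg0 I (Finset.mem_filter.1 hI).2
    rw [this, add_zero]
  have hbij : ∑ x ∈ (Finset.univ.filter (fun I : Fin n → Fin m => StrictMono I)) ×ˢ
          (Finset.univ : Finset (Equiv.Perm (Fin n))), g x.1
      = ∑ I ∈ Finset.univ.filter (fun I : Fin n → Fin m => Function.Injective I), g I := by
    refine Finset.sum_nbij' (fun x => x.1 ∘ ⇑x.2)
      (fun I => (I ∘ ⇑(Tuple.sort I), (Tuple.sort I)⁻¹)) ?_ ?_ ?_ ?_ ?_
    · intro x hx
      have hmono : StrictMono x.1 := (Finset.mem_filter.1 (Finset.mem_product.1 hx).1).2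
      exact Finset.mem_filter.2 ⟨Finset.mem_univ _, hmono.injective.comp x.2.injective⟩
    · intro I hI
      have hIinj : Function.Injective I := (Finset.mem_filter.1 hI).2
      refine Finset.mem_product.2 ⟨Finset.mem_filter.2 ⟨Finset.mem_univ _, ?_⟩, Finset.mem_univ _⟩
      exact (Tuple.monotone_sort I).strictMono_of_injective
        (hIinj.comp (Tuple.sort I).injective)
    · intro x hx
      have hmono : StrictMono x.1 := (Finset.mem_filter.1 (Finset.mem_product.1 hx).1).2
      have hs := sort_comp_perm hmono x.2
      ext y
      · simp only [hs]
        simp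
      · simp only [hs]
        simp
    · intro I hI
      funext y
      simp
    · intro x hx
      have hmono : StrictMono x.1 := (Finset.mem_filter.1 (Finset.mem_product.1 hx).1).2
      exact (hgp x.1 x.2).symm
  rw [hsplit, ← hbij, Finset.sum_product]
  rw [Finset.sum_congr rfl (fun I _ => Finset.sum_const (g I))]
  simp only [Finset.card_univ, Fintype.card_perm, Fintype.card_fin, nsmul_eq_mul]
  rw [Finset.mul_sum]

lemma sum_insertNth {n m : ℕ} (p : Fin (n + 1)) (F : (Fin (n + 1) → Fin m) → ℂ) :
    ∑ I : Fin (n + 1) → Fin m, F I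
      = ∑ i : Fin m, ∑ J : Fin n → Fin m, F (Fin.insertNth p i J) := by
  rw [← Equiv.sum_comp (Fin.insertNthEquiv (fun _ => Fin m) p) F, Fintype.sum_prod_type]
  rfl

lemma comp_succAbove_insertNth {n m : ℕ} (p : Fin (n + 1)) (i : Fin m) (J : Fin n → Fin m) :
    Fin.insertNth p i J ∘ p.succAbove = J := by
  funext x; simp

open ComplexConjugate in
lemma main_identity {n m : ℕ} (a : Fin m → ℂ) (b : (Fin (n + 1) → Fin m) → ℂ) (hb : IsAlt b) :
    ∑ I : Fin (n + 2) → Fin m, Lam a b I * conj (Lam a b I)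
      = ((n : ℂ) + 2) * ((∑ i, a i * conj (a i)) *
            (∑ J : Fin (n + 1) → Fin m, b J * conj (b J)))
        - ((n : ℂ) + 2) * ((n : ℂ) + 1) * ∑ K : Fin n → Fin m,
            (∑ i, a i * conj (b (Fin.cons i K))) *
              conj (∑ i, a i * conj (b (Fin.cons i K))) := by
  have hΛ : IsAlt (Lam a b) := lam_isAlt a hb
  have hpow : ∀ t : ℕ, (-1 : ℂ) ^ t * (-1 : ℂ) ^ t = 1 := fun t => by
    rw [← pow_add]; exact Even.neg_one_pow ⟨t, rfl⟩
  -- Step AB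
  have stepAB : ∑ I : Fin (n + 2) → Fin m, Lam a b I * conj (Lam a b I)
      = ((n : ℂ) + 2) * ∑ i : Fin m, ∑ J : Fin (n + 1) → Fin m,
          a i * b J * conj (Lam a b (Fin.cons i J)) := by
    calc ∑ I : Fin (n + 2) → Fin m, Lam a b I * conj (Lam a b I)
        = ∑ I : Fin (n + 2) → Fin m, ∑ t : Fin (n + 2),
            (-1 : ℂ) ^ (t : ℕ) * a (I t) * b (I ∘ t.succAbove) * conj (Lam a b I) := by
          refine Finset.sum_congr rfl fun I _ => ?_
          nth_rewrite 1 [Lam]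
          rw [Finset.sum_mul]
      _ = ∑ t : Fin (n + 2), ∑ I : Fin (n + 2) → Fin m,
            (-1 : ℂ) ^ (t : ℕ) * a (I t) * b (I ∘ t.succAbove) * conj (Lam a b I) :=
          Finset.sum_comm
      _ = ∑ _t : Fin (n + 2), ∑ i : Fin m, ∑ J : Fin (n + 1) → Fin m,
            a i * b J * conj (Lam a b (Fin.cons i J)) := by
          refine Finset.sum_congr rfl fun t _ => ?_
          rw [sum_insertNth t (fun I => (-1 : ℂ) ^ (t : ℕ) * a (I t) * b (I ∘ t.succAbove)
            * conj (Lam a b I))]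
          refine Finset.sum_congr rfl fun i _ => Finset.sum_congr rfl fun J _ => ?_
          rw [Fin.insertNth_apply_same, comp_succAbove_insertNth, hΛ.insertNth' t i J,
            map_mul, map_pow, map_neg, map_one]
          have := hpow (t : ℕ)
          linear_combination a i * b J * conj (Lam a b (Fin.cons i J)) * this
      _ = ((n : ℂ) + 2) * ∑ i : Fin m, ∑ J : Fin (n + 1) → Fin m,
            a i * b J * conj (Lam a b (Fin.cons i J)) := by
          rw [Finset.sum_const, Finset.card_univ, Fintype.card_fin, nsmul_eq_mul]
          push_cast
          ring
  rw [stepAB]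
  -- expand the cons
  have expand : ∀ (i : Fin m) (J : Fin (n + 1) → Fin m),
      a i * b J * conj (Lam a b (Fin.cons i J))
        = (a i * conj (a i)) * (b J * conj (b J))
          - ∑ p : Fin (n + 1), a i * b J *
              conj ((-1 : ℂ) ^ (p : ℕ) * a (J p) * b (Fin.cons i (J ∘ p.succAbove))) := by
    intro i J
    rw [lam_cons, map_sub, map_mul, map_sum, mul_sub, Finset.mul_sum]
    ring
  rw [Finset.sum_congr rfl fun i _ => Finset.sum_congr rfl fun J _ => expand i J]
  rw [Finset.sum_congr rfl fun i (_ : i ∈ Finset.univ) => Finset.sum_sub_distrib _ _, Finset.sum_sub_distrib]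
  -- first term
  have hfirst : ∑ i : Fin m, ∑ J : Fin (n + 1) → Fin m,
      (a i * conj (a i)) * (b J * conj (b J))
        = (∑ i, a i * conj (a i)) * (∑ J : Fin (n + 1) → Fin m, b J * conj (b J)) := by
    rw [Finset.sum_mul_sum]
  -- second term
  have hsecond : ∑ i : Fin m, ∑ J : Fin (n + 1) → Fin m, ∑ p : Fin (n + 1),
      a i * b J * conj ((-1 : ℂ) ^ (p : ℕ) * a (J p) * b (Fin.cons i (J ∘ p.succAbove)))
        = ((n : ℂ) + 1) * ∑ K : Fin n → Fin m,
            (∑ i, a i * conj (b (Fin.cons i K))) *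
              conj (∑ i, a i * conj (b (Fin.cons i K))) := by
    calc ∑ i : Fin m, ∑ J : Fin (n + 1) → Fin m, ∑ p : Fin (n + 1),
        a i * b J * conj ((-1 : ℂ) ^ (p : ℕ) * a (J p) * b (Fin.cons i (J ∘ p.succAbove)))
        = ∑ i : Fin m, ∑ p : Fin (n + 1), ∑ J : Fin (n + 1) → Fin m,
            a i * b J * conj ((-1 : ℂ) ^ (p : ℕ) * a (J p) * b (Fin.cons i (J ∘ p.succAbove))) :=
          Finset.sum_congr rfl fun i _ => Finset.sum_comm
      _ = ∑ _p : Fin (n + 1), ∑ K : Fin n → Fin m,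
            (∑ i, a i * conj (b (Fin.cons i K))) *
              conj (∑ i, a i * conj (b (Fin.cons i K))) := by
          rw [Finset.sum_comm]
          refine Finset.sum_congr rfl fun p _ => ?_
          have hJ : ∀ i : Fin m, ∑ J : Fin (n + 1) → Fin m,
              a i * b J * conj ((-1 : ℂ) ^ (p : ℕ) * a (J p) * b (Fin.cons i (J ∘ p.succAbove)))
                = ∑ j : Fin m, ∑ K : Fin n → Fin m,
                    (a i * conj (b (Fin.cons i K))) * conj (a j * conj (b (Fin.cons j K))) := by
            intro i
            rw [sum_insertNth p (fun J => a i * b J *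
              conj ((-1 : ℂ) ^ (p : ℕ) * a (J p) * b (Fin.cons i (J ∘ p.succAbove))))]
            refine Finset.sum_congr rfl fun j _ => Finset.sum_congr rfl fun K _ => ?_
            rw [Fin.insertNth_apply_same, comp_succAbove_insertNth, hb.insertNth' p j K,
              map_mul, map_mul, map_pow, map_neg, map_one, map_mul, Complex.conj_conj]
            linear_combination a i * b (Fin.cons j K) * (starRingEnd ℂ) (a j) *
              (starRingEnd ℂ) (b (Fin.cons i K)) * hpow (p : ℕ)
          rw [Finset.sum_congr rfl fun i _ => hJ i]
          rw [Finset.sum_congr rfl fun (i : Fin m) (_ : i ∈ Finset.univ) =>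
            (Finset.sum_comm (s := Finset.univ) (t := Finset.univ)
              (f := fun (j : Fin m) (K : Fin n → Fin m) =>
                (a i * conj (b (Fin.cons i K))) * conj (a j * conj (b (Fin.cons j K)))))]
          rw [Finset.sum_comm]
          refine Finset.sum_congr rfl fun K _ => ?_
          rw [map_sum, Finset.sum_mul_sum]
      _ = ((n : ℂ) + 1) * ∑ K : Fin n → Fin m,
            (∑ i, a i * conj (b (Fin.cons i K))) *
              conj (∑ i, a i * conj (b (Fin.cons i K))) := by
          rw [Finset.sum_const, Finset.card_univ, Fintype.card_fin, nsmul_eq_mul]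
          push_cast
          ring
  rw [hfirst, hsecond]
  ring

lemma abs_sign_mul {n : ℕ} (σ : Equiv.Perm (Fin n)) (z : ℂ) :
    ‖((Equiv.Perm.sign σ : ℤ) : ℂ) * z‖ = ‖z‖ := by
  rcases Int.units_eq_one_or (Equiv.Perm.sign σ) with h | h <;> simp [h]

open ComplexConjugate in
theorem lam_l2_bound_aux
    (k m : ℕ) (hk : 0 < k) (hm : 0 < m) (hkm : k + 1 ≤ m)
    (a : Fin m → ℂ) (b : (Fin k → Fin m) → ℂ)
    (halt : ∀ (J : Fin k → Fin m) (σ : Equiv.Perm (Fin k)),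
      b (J ∘ σ) = ((Equiv.Perm.sign σ : ℤ) : ℂ) * b J) :
    ∑ I ∈ Finset.univ.filter (fun I : Fin (k + 1) → Fin m => StrictMono I),
        ‖Lam a b I‖ ^ 2 ≤
      (∑ t, ‖a t‖ ^ 2) *
        ∑ J ∈ Finset.univ.filter (fun J : Fin k → Fin m => StrictMono J),
          ‖b J‖ ^ 2 := by
  obtain ⟨n, rfl⟩ : ∃ n, k = n + 1 := ⟨k - 1, by omega⟩
  have hb : IsAlt b := halt
  have hΛ : IsAlt (Lam a b) := lam_isAlt a hb
  have hmc : ∀ z : ℂ, z * conj z = ((‖z‖ ^ 2 : ℝ) : ℂ) := fun z => by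
    rw [Complex.mul_conj, Complex.sq_norm]
  -- real form of the main identity
  have hreal : ∑ I : Fin (n + 2) → Fin m, ‖Lam a b I‖ ^ 2
      = ((n : ℝ) + 2) * ((∑ i, ‖a i‖ ^ 2) *
            ∑ J : Fin (n + 1) → Fin m, ‖b J‖ ^ 2)
        - ((n : ℝ) + 2) * ((n : ℝ) + 1) * ∑ K : Fin n → Fin m,
            ‖∑ i, a i * conj (b (Fin.cons i K))‖ ^ 2 := by
    have h2 := main_identity a b hb
    simp only [hmc] at h2
    exact_mod_cast h2
  -- reduce full sums to strictly monotone sums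
  have hΛall := sum_all_eq_factorial_mul (fun I : Fin (n + 2) → Fin m => ‖Lam a b I‖ ^ 2)
    (fun I hI => by show ‖Lam a b I‖ ^ 2 = 0; rw [hΛ.eq_zero hI]; simp)
    (fun I σ => by
      show ‖Lam a b (I ∘ ⇑σ)‖ ^ 2 = ‖Lam a b I‖ ^ 2
      rw [hΛ I σ, abs_sign_mul])
  have hball := sum_all_eq_factorial_mul (fun J : Fin (n + 1) → Fin m => ‖b J‖ ^ 2)
    (fun J hJ => by show ‖b J‖ ^ 2 = 0; rw [hb.eq_zero hJ]; simp)
    (fun J σ => by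
      show ‖b (J ∘ ⇑σ)‖ ^ 2 = ‖b J‖ ^ 2
      rw [hb J σ, abs_sign_mul])
  rw [hΛall, hball] at hreal
  have hC : (0 : ℝ) ≤ ∑ K : Fin n → Fin m,
      ‖∑ i, a i * conj (b (Fin.cons i K))‖ ^ 2 :=
    Finset.sum_nonneg fun K _ => sq_nonneg _
  have hfac : (0 : ℝ) < ((n + 2).factorial : ℝ) := by positivity
  have hfacs : ((n + 2).factorial : ℝ) = ((n : ℝ) + 2) * ((n + 1).factorial : ℝ) := by
    rw [show n + 2 = (n + 1) + 1 from rfl, Nat.factorial_succ]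
    push_cast
    ring
  rw [hfacs] at hreal hfac
  have hc2 : (0:ℝ) ≤ ((n : ℝ) + 2) * ((n : ℝ) + 1) * ∑ K : Fin n → Fin m,
      ‖∑ i, a i * conj (b (Fin.cons i K))‖ ^ 2 := by positivity
  nlinarith [hreal, hC, hfac, hc2,
    Finset.sum_nonneg (fun (t : Fin m) (_ : t ∈ Finset.univ) => sq_nonneg (‖a t‖))]


theorem lam_l2_bound
    (k m : ℕ) (hk : 0 < k) (hm : 0 < m) (hkm : k + 1 ≤ m)
    (a : Fin m → ℂ) (b : (Fin k → Fin m) → ℂ)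
    (halt : ∀ (J : Fin k → Fin m) (σ : Equiv.Perm (Fin k)),
      b (J ∘ σ) = ((Equiv.Perm.sign σ : ℤ) : ℂ) * b J) :
    ∑ I ∈ Finset.univ.filter (fun I : Fin (k + 1) → Fin m => StrictMono I),
        ‖Lam a b I‖ ^ 2 ≤
      (∑ t, ‖a t‖ ^ 2) *
        ∑ J ∈ Finset.univ.filter (fun J : Fin k → Fin m => StrictMono J),
          ‖b J‖ ^ 2 :=
  lam_l2_bound_aux k m hk hm hkm a b halt
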